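/- Let w : [0,1] → [0,1] be a probability weighting function (strictly increasing, continuous, w(0)=0, w(1)=1, differentiable, concave on [0,p̄] and convex on [p̄,1] for some p̄ ∈ (0,1)), let δ ∈ (0,1), and let x* ∈ [0,1] be a maximizer of x ↦ w(x)/(1 − (1 − x)δ) on [0,1]. Then for every integer n ≥ 1: Σ_{k=0}^{n} ( w(1 − (1 − x*)^{k+1}) − w(1 − (1 − x*)^{k}) ) δ^k ≤ w(x*) · Σ_{k=0}^{n} (1 − x*)^k δ^k, and the same inequality holds with n = ∞ (sums of the convergent series). -/
import Mathlib


open Set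

/-- If `x*` maximizes `x ↦ w(x)/(1 − (1 − x)δ)` on `[0,1]`, then for
every `n ≥ 1` the plan "purchase in periods `0,…,n`" gives the buyer nonpositive payoff:
`Σ_{k=0}^n (w(1−(1−x*)^{k+1}) − w(1−(1−x*)^k)) δ^k ≤ w(x*) Σ_{k=0}^n (1−x*)^k δ^k`,
and the same holds for the infinite series (`n = ∞`). -/
theorem stmt16
    (w : ℝ → ℝ)
    (hmono : StrictMonoOn w (Icc (0:ℝ) 1))
    (hcont : ContinuousOn w (Icc (0:ℝ) 1))
    (h0 : w 0 = 0) (h1 : w 1 = 1)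
    (hdiff : DifferentiableOn ℝ w (Icc (0:ℝ) 1))
    (pbar : ℝ) (hpbar : pbar ∈ Ioo (0:ℝ) 1)
    (hconc : ConcaveOn ℝ (Icc (0:ℝ) pbar) w)
    (hconv : ConvexOn ℝ (Icc pbar 1) w)
    (δ : ℝ) (hδ : δ ∈ Ioo (0:ℝ) 1)
    (xs : ℝ) (hxs : xs ∈ Icc (0:ℝ) 1)
    (hmax : ∀ x ∈ Icc (0:ℝ) 1,
      w x / (1 - (1 - x) * δ) ≤ w xs / (1 - (1 - xs) * δ)) :
    (∀ n : ℕ, 1 ≤ n →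
      ∑ k ∈ Finset.range (n + 1),
          (w (1 - (1 - xs) ^ (k + 1)) - w (1 - (1 - xs) ^ k)) * δ ^ k
        ≤ w xs * ∑ k ∈ Finset.range (n + 1), (1 - xs) ^ k * δ ^ k) ∧
    (∑' k : ℕ, (w (1 - (1 - xs) ^ (k + 1)) - w (1 - (1 - xs) ^ k)) * δ ^ k
      ≤ w xs * ∑' k : ℕ, (1 - xs) ^ k * δ ^ k) := by
  obtain ⟨hδ0, hδ1⟩ := hδ
  obtain ⟨hxs0, hxs1⟩ := hxs
  set t : ℝ := 1 - xs with ht_def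
  have ht0 : 0 ≤ t := by simp [ht_def]; linarith
  have ht1 : t ≤ 1 := by simp [ht_def]; linarith
  have htpow : ∀ k : ℕ, t ^ k ∈ Icc (0:ℝ) 1 :=
    fun k => ⟨pow_nonneg ht0 k, pow_le_one₀ ht0 ht1⟩
  have hmem : ∀ k : ℕ, (1 - t ^ k) ∈ Icc (0:ℝ) 1 := by
    intro k
    constructor <;> [linarith [(htpow k).2]; linarith [(htpow k).1]]
  have hD : (0:ℝ) < 1 - t * δ := by nlinarith
  set M : ℝ := w xs / (1 - t * δ) with hM_def
  have hMD : M * (1 - t * δ) = w xs := div_mul_cancel₀ _ (ne_of_gt hD)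
  -- key bound from maximality
  have key : ∀ k : ℕ, w (1 - t ^ k) ≤ M * (1 - t ^ k * δ) := by
    intro k
    have hpos : (0:ℝ) < 1 - t ^ k * δ := by
      have := (htpow k).2
      have := (htpow k).1
      nlinarith
    have := hmax (1 - t ^ k) (hmem k)
    rw [show (1 : ℝ) - (1 - (1 - t ^ k)) * δ = 1 - t ^ k * δ by ring] at this
    calc w (1 - t ^ k) = w (1 - t ^ k) / (1 - t ^ k * δ) * (1 - t ^ k * δ) := by
          field_simp
      _ ≤ M * (1 - t ^ k * δ) := by
          apply mul_le_mul_of_nonneg_right _ (le_of_lt hpos)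
          exact this
  have hw0 : 0 ≤ w xs := by
    rw [← h0]
    rcases eq_or_lt_of_le hxs0 with h | h
    · rw [← h]
    · exact le_of_lt (hmono ⟨le_refl 0, zero_le_one⟩ ⟨hxs0, hxs1⟩ h)
  have hM0 : 0 ≤ M := div_nonneg hw0 (le_of_lt hD)
  -- strengthened induction
  have C : ∀ n : ℕ,
      (∑ k ∈ Finset.range (n + 1),
          (w (1 - t ^ (k + 1)) - w (1 - t ^ k)) * δ ^ k) - w (1 - t ^ (n + 1)) * δ ^ n
        ≤ M * (1 - (t * δ) ^ (n + 1)) - M * (1 - t ^ (n + 1) * δ) * δ ^ n := by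
    intro n
    induction n with
    | zero => simp [h0]
    | succ m ih =>
      rw [Finset.sum_range_succ]
      have hdd : δ ^ m - δ ^ (m + 1) ≥ 0 := by
        have : δ ^ (m + 1) ≤ δ ^ m := pow_le_pow_of_le_one (le_of_lt hδ0) (le_of_lt hδ1) (by omega)
        linarith
      have h1' := key (m + 1)
      have hstep : w (1 - t ^ (m + 1)) * (δ ^ m - δ ^ (m + 1))
          ≤ M * (1 - t ^ (m + 1) * δ) * (δ ^ m - δ ^ (m + 1)) :=
        mul_le_mul_of_nonneg_right h1' hdd
      have halg : M * (1 - (t * δ) ^ (m + 1)) - M * (1 - t ^ (m + 1) * δ) * δ ^ (m + 1)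
          ≤ M * (1 - (t * δ) ^ (m + 2)) - M * (1 - t ^ (m + 2) * δ) * δ ^ (m + 1) := by
        have hfac : (0:ℝ) ≤ M * (t ^ (m+1) * δ ^ (m+1)) * (1 - δ) := by
          apply mul_nonneg
          · exact mul_nonneg hM0
              (mul_nonneg (pow_nonneg ht0 _) (pow_nonneg (le_of_lt hδ0) _))
          · linarith
        have heq : (M * (1 - (t * δ) ^ (m + 2)) - M * (1 - t ^ (m + 2) * δ) * δ ^ (m + 1))
            - (M * (1 - (t * δ) ^ (m + 1)) - M * (1 - t ^ (m + 1) * δ) * δ ^ (m + 1))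
            = M * (t ^ (m+1) * δ ^ (m+1)) * (1 - δ) := by simp only [mul_pow]; ring
        linarith
      calc (∑ k ∈ Finset.range (m + 1),
              (w (1 - t ^ (k + 1)) - w (1 - t ^ k)) * δ ^ k)
            + (w (1 - t ^ (m + 2)) - w (1 - t ^ (m + 1))) * δ ^ (m + 1)
            - w (1 - t ^ (m + 2)) * δ ^ (m + 1)
          = ((∑ k ∈ Finset.range (m + 1),
              (w (1 - t ^ (k + 1)) - w (1 - t ^ k)) * δ ^ k) - w (1 - t ^ (m + 1)) * δ ^ m)
            + w (1 - t ^ (m + 1)) * (δ ^ m - δ ^ (m + 1)) := by ring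
        _ ≤ (M * (1 - (t * δ) ^ (m + 1)) - M * (1 - t ^ (m + 1) * δ) * δ ^ m)
            + M * (1 - t ^ (m + 1) * δ) * (δ ^ m - δ ^ (m + 1)) := add_le_add ih hstep
        _ = M * (1 - (t * δ) ^ (m + 1)) - M * (1 - t ^ (m + 1) * δ) * δ ^ (m + 1) := by ring
        _ ≤ _ := halg
  -- main finite bound for each n
  have main : ∀ n : ℕ,
      ∑ k ∈ Finset.range (n + 1),
          (w (1 - t ^ (k + 1)) - w (1 - t ^ k)) * δ ^ k
        ≤ M * (1 - (t * δ) ^ (n + 1)) := by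
    intro n
    have := C n
    have h2 : w (1 - t ^ (n + 1)) * δ ^ n ≤ M * (1 - t ^ (n + 1) * δ) * δ ^ n :=
      mul_le_mul_of_nonneg_right (key (n + 1)) (pow_nonneg (le_of_lt hδ0) n)
    linarith
  have hgeom : ∀ n : ℕ, w xs * ∑ k ∈ Finset.range (n + 1), t ^ k * δ ^ k
      = M * (1 - (t * δ) ^ (n + 1)) := by
    intro n
    rw [← hMD]
    have : ∑ k ∈ Finset.range (n + 1), t ^ k * δ ^ k
        = ∑ k ∈ Finset.range (n + 1), (t * δ) ^ k := by
      refine Finset.sum_congr rfl fun k _ => (mul_pow t δ k).symm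
    rw [this]
    have hgm := geom_sum_mul (t * δ) (n + 1)
    nlinarith [hgm]
  refine ⟨fun n _ => ?_, ?_⟩
  · rw [hgeom n]; exact main n
  · -- infinite case
    have htδ : t * δ < 1 := by nlinarith
    have htδ0 : 0 ≤ t * δ := mul_nonneg ht0 (le_of_lt hδ0)
    have hsum_rhs : HasSum (fun k : ℕ => t ^ k * δ ^ k) (1 - t * δ)⁻¹ := by
      have := hasSum_geometric_of_lt_one htδ0 htδ
      convert this using 2 with k
      exact (mul_pow t δ k).symm
    have hrhs : w xs * ∑' k : ℕ, t ^ k * δ ^ k = M := by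
      rw [hsum_rhs.tsum_eq, ← hMD]
      field_simp
    rw [hrhs]
    have hsummable : Summable (fun k : ℕ => (w (1 - t ^ (k + 1)) - w (1 - t ^ k)) * δ ^ k) := by
      apply Summable.of_nonneg_of_le _ _ (summable_geometric_of_lt_one (le_of_lt hδ0) hδ1)
      · intro k
        apply mul_nonneg _ (pow_nonneg (le_of_lt hδ0) k)
        have : w (1 - t ^ k) ≤ w (1 - t ^ (k + 1)) := by
          apply (hmono.monotoneOn) (hmem k) (hmem (k + 1))
          have : t ^ (k + 1) ≤ t ^ k := pow_le_pow_of_le_one ht0 ht1 (by omega)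
          linarith
        linarith
      · intro k
        have hub : w (1 - t ^ (k + 1)) - w (1 - t ^ k) ≤ 1 := by
          have ha : w (1 - t ^ (k + 1)) ≤ w 1 :=
            (hmono.monotoneOn) (hmem (k+1)) ⟨zero_le_one, le_refl 1⟩ (hmem (k+1)).2
          have hb : w 0 ≤ w (1 - t ^ k) :=
            (hmono.monotoneOn) ⟨le_refl 0, zero_le_one⟩ (hmem k) (hmem k).1
          rw [h0] at hb; rw [h1] at ha; linarith
        calc (w (1 - t ^ (k + 1)) - w (1 - t ^ k)) * δ ^ k
            ≤ 1 * δ ^ k := mul_le_mul_of_nonneg_right hub (pow_nonneg (le_of_lt hδ0) k)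
          _ = δ ^ k := one_mul _
    apply Summable.tsum_le_of_sum_range_le hsummable
    intro n
    cases n with
    | zero => simpa using hM0
    | succ m =>
      calc ∑ k ∈ Finset.range (m + 1),
            (w (1 - t ^ (k + 1)) - w (1 - t ^ k)) * δ ^ k
          ≤ M * (1 - (t * δ) ^ (m + 1)) := main m
        _ ≤ M := by nlinarith [pow_nonneg htδ0 (m + 1), pow_le_one₀ htδ0 (le_of_lt htδ) (n := m+1)]
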